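/- Let k be a field with a primitive l-th root of unity, char(k) ∤ l, and let μ_l act on A = k[z,w]/(zw-t) (t ∈ k) by (z,w) ↦ (ζz, ζ^{-1}w). Then the invariant subring A^{μ_l} is generated as a k-algebra by x = z^l and y = w^l, and satisfies the relation xy = t^l; i.e., A^{μ_l} ≅ k[x,y]/(xy - t^l). -/

import Mathlib

open MvPolynomial

/-- The `μ_l`-action on representatives: the `k`-algebra endomorphism of `k[z,w]`
sending `z ↦ ξ z`, `w ↦ ξ⁻¹ w`. -/
noncomputable def stmt3.σ {k : Type*} [Field k] (ξ : k) :
    MvPolynomial (Fin 2) k →ₐ[k] MvPolynomial (Fin 2) k :=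
  aeval ![ξ • X 0, ξ⁻¹ • X 1]

namespace Stmt3Aux

variable {k : Type*} [Field k]

lemma monomial_fin2 (d : Fin 2 →₀ ℕ) (c : k) :
    (monomial d c : MvPolynomial (Fin 2) k) = C c * X 0 ^ (d 0) * X 1 ^ (d 1) := by
  rw [monomial_eq, Finsupp.prod_fintype _ _ (fun i => pow_zero _), Fin.prod_univ_two, mul_assoc]

lemma sigma_monomial (ξ : k) (d : Fin 2 →₀ ℕ) (c : k) :
    stmt3.σ ξ (monomial d c) = (ξ ^ (d 0) * ξ⁻¹ ^ (d 1)) • monomial d c := by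
  rw [monomial_fin2, smul_eq_C_mul]
  simp only [stmt3.σ, map_mul, map_pow, aeval_X, aeval_C, Matrix.cons_val_zero,
    Matrix.cons_val_one, Matrix.head_cons, smul_eq_C_mul, map_mul, C_pow, algebraMap_eq]
  ring

noncomputable def ee (a b : ℕ) : Fin 2 →₀ ℕ := Finsupp.single 0 a + Finsupp.single 1 b

lemma ee_zero (a b : ℕ) : ee a b 0 = a := by simp [ee, Finsupp.single_apply]
lemma ee_one (a b : ℕ) : ee a b 1 = b := by simp [ee, Finsupp.single_apply]

lemma eq_ee (d : Fin 2 →₀ ℕ) : d = ee (d 0) (d 1) := by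
  ext i
  fin_cases i <;> simp [ee, Finsupp.single_apply]

lemma ee_succ (a b : ℕ) :
    ee (a + 1) (b + 1) = Finsupp.single 0 1 + (Finsupp.single 1 1 + ee a b) := by
  simp only [ee, Finsupp.single_add]
  abel

lemma ee_sum (a b : ℕ) : ((ee a b).sum fun _ n => n) = a + b := by
  classical
  rw [ee, Finsupp.sum_add_index (by simp) (by simp)]
  simp [Finsupp.sum_single_index]

lemma pure_eq_zero {t : k} {p : MvPolynomial (Fin 2) k}
    (hp : p ∈ Ideal.span {(X 0 * X 1 - C t : MvPolynomial (Fin 2) k)})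
    (hpure : ∀ d : Fin 2 →₀ ℕ, 1 ≤ d 0 → 1 ≤ d 1 → coeff d p = 0) : p = 0 := by
  rw [Ideal.mem_span_singleton] at hp
  obtain ⟨h, rfl⟩ := hp
  have key : ∀ a b : ℕ, coeff (ee a b) h = t * coeff (ee (a+1) (b+1)) h := by
    intro a b
    have h0 := hpure (ee (a+1) (b+1)) (by simp [ee_zero]) (by simp [ee_one])
    rw [sub_mul, coeff_sub, coeff_C_mul, mul_assoc, ee_succ, coeff_X_mul, coeff_X_mul,
      sub_eq_zero] at h0
    rw [ee_succ]
    exact h0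
  have hvan : ∀ a b : ℕ, h.totalDegree + 1 ≤ a → coeff (ee a b) h = 0 := by
    intro a b hab
    apply coeff_eq_zero_of_totalDegree_lt
    calc h.totalDegree < a + b := by omega
    _ = ∑ i ∈ (ee a b).support, ee a b i := (ee_sum a b).symm
  have main : ∀ r a b : ℕ, h.totalDegree + 1 ≤ a + r → coeff (ee a b) h = 0 := by
    intro r
    induction r with
    | zero => intro a b hab; exact hvan a b (by omega)
    | succ r ih =>
      intro a b hab
      rw [key, ih (a+1) (b+1) (by omega), mul_zero]
  have hh : h = 0 := by
    ext d
    rw [coeff_zero, eq_ee d]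
    exact main (h.totalDegree + 1) (d 0) (d 1) (by omega)
  rw [hh, mul_zero]

lemma base0 (s : k) (m n : ℕ) (c : k) (h : n ≤ m) :
    (C c * X 0 ^ m * X 1 ^ n - C (c * s ^ n) * X 0 ^ (m - n) : MvPolynomial (Fin 2) k)
      ∈ Ideal.span {(X 0 * X 1 - C s : MvPolynomial (Fin 2) k)} := by
  obtain ⟨u, rfl⟩ : ∃ u, m = n + u := ⟨m - n, by omega⟩
  have hu : n + u - n = u := by omega
  rw [hu]
  have key : (C c * X 0 ^ (n + u) * X 1 ^ n - C (c * s ^ n) * X 0 ^ u : MvPolynomial (Fin 2) k)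
      = (C c * X 0 ^ u) * ((X 0 * X 1) ^ n - (C s) ^ n) := by
    rw [map_mul, ← C_pow]; ring
  rw [key]
  exact Ideal.mul_mem_left _ _
    (Ideal.mem_span_singleton.mpr (sub_dvd_pow_sub_pow _ _ n))

lemma base1 (s : k) (m n : ℕ) (c : k) (h : m ≤ n) :
    (C c * X 0 ^ m * X 1 ^ n - C (c * s ^ m) * X 1 ^ (n - m) : MvPolynomial (Fin 2) k)
      ∈ Ideal.span {(X 0 * X 1 - C s : MvPolynomial (Fin 2) k)} := by
  obtain ⟨u, rfl⟩ : ∃ u, n = m + u := ⟨n - m, by omega⟩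
  have hu : m + u - m = u := by omega
  rw [hu]
  have key : (C c * X 0 ^ m * X 1 ^ (m + u) - C (c * s ^ m) * X 1 ^ u : MvPolynomial (Fin 2) k)
      = (C c * X 1 ^ u) * ((X 0 * X 1) ^ m - (C s) ^ m) := by
    rw [map_mul, ← C_pow]; ring
  rw [key]
  exact Ideal.mul_mem_left _ _
    (Ideal.mem_span_singleton.mpr (sub_dvd_pow_sub_pow _ _ m))

lemma reduce (s : k) (q : MvPolynomial (Fin 2) k) : ∃ f g : Polynomial k,
    q - (Polynomial.aeval (X 0 : MvPolynomial (Fin 2) k) f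
        + X 1 * Polynomial.aeval (X 1 : MvPolynomial (Fin 2) k) g)
      ∈ Ideal.span {(X 0 * X 1 - C s : MvPolynomial (Fin 2) k)} := by
  induction q using MvPolynomial.induction_on' with
  | add p q hp hq =>
    obtain ⟨f1, g1, h1⟩ := hp
    obtain ⟨f2, g2, h2⟩ := hq
    refine ⟨f1 + f2, g1 + g2, ?_⟩
    have := Ideal.add_mem _ h1 h2
    convert this using 1
    simp only [map_add]
    ring
  | monomial d c =>
    rcases le_total (d 1) (d 0) with hmn | hnm
    · refine ⟨Polynomial.C (c * s ^ (d 1)) * Polynomial.X ^ (d 0 - d 1), 0, ?_⟩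
      have := base0 s (d 0) (d 1) c hmn
      rw [monomial_fin2]
      convert this using 1
      simp only [map_mul, map_pow, Polynomial.aeval_C, Polynomial.aeval_X, algebraMap_eq,
        C_pow, map_zero, mul_zero, add_zero, zero_add]
      try ring
    · by_cases hz : d 1 - d 0 = 0
      · refine ⟨Polynomial.C (c * s ^ (d 0)), 0, ?_⟩
        have := base1 s (d 0) (d 1) c hnm
        rw [hz, pow_zero, mul_one] at this
        rw [monomial_fin2]
        convert this using 1
        simp only [map_mul, map_pow, Polynomial.aeval_C, Polynomial.aeval_X, algebraMap_eq,
          C_pow, map_zero, mul_zero, add_zero, zero_add]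
        try ring
      · obtain ⟨j, hj⟩ : ∃ j, d 1 - d 0 = j + 1 := ⟨d 1 - d 0 - 1, by omega⟩
        refine ⟨0, Polynomial.C (c * s ^ (d 0)) * Polynomial.X ^ j, ?_⟩
        have := base1 s (d 0) (d 1) c hnm
        rw [hj] at this
        rw [monomial_fin2]
        convert this using 1
        simp only [map_mul, map_pow, Polynomial.aeval_C, Polynomial.aeval_X, algebraMap_eq,
          C_pow, map_zero, mul_zero, add_zero, zero_add]
        try ring

lemma pure_zero (l : ℕ) (hl : 0 < l) (t : k) (f g : Polynomial k)
    (h : (Polynomial.aeval ((X 0 : MvPolynomial (Fin 2) k) ^ l) f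
        + X 1 ^ l * Polynomial.aeval ((X 1 : MvPolynomial (Fin 2) k) ^ l) g)
        ∈ Ideal.span {(X 0 * X 1 - C t : MvPolynomial (Fin 2) k)}) : f = 0 ∧ g = 0 := by
  set p : MvPolynomial (Fin 2) k := Polynomial.aeval ((X 0 : MvPolynomial (Fin 2) k) ^ l) f
        + X 1 ^ l * Polynomial.aeval ((X 1 : MvPolynomial (Fin 2) k) ^ l) g with hpdef
  have hpure : ∀ d : Fin 2 →₀ ℕ, 1 ≤ d 0 → 1 ≤ d 1 → coeff d p = 0 := by
    intro d hd0 hd1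
    have h1 : ∀ i : ℕ, Finsupp.single (0 : Fin 2) i ≠ d := by
      intro i hh
      have := DFunLike.congr_fun hh 1
      simp [Finsupp.single_apply] at this
      omega
    have h2 : ∀ i : ℕ, Finsupp.single (1 : Fin 2) i ≠ d := by
      intro i hh
      have := DFunLike.congr_fun hh 0
      simp [Finsupp.single_apply] at this
      omega
    rw [hpdef, coeff_add]
    have A : coeff d (Polynomial.aeval ((X 0 : MvPolynomial (Fin 2) k) ^ l) f) = 0 := by
      rw [Polynomial.aeval_eq_sum_range, coeff_sum]
      apply Finset.sum_eq_zero
      intro i _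
      rw [coeff_smul, ← pow_mul, coeff_X_pow, if_neg (h1 _), smul_zero]
    have B : coeff d ((X 1 : MvPolynomial (Fin 2) k) ^ l
        * Polynomial.aeval ((X 1 : MvPolynomial (Fin 2) k) ^ l) g) = 0 := by
      rw [Polynomial.aeval_eq_sum_range, Finset.mul_sum, coeff_sum]
      apply Finset.sum_eq_zero
      intro i _
      rw [mul_smul_comm, ← pow_mul, ← pow_add, coeff_smul, coeff_X_pow, if_neg (h2 _), smul_zero]
    rw [A, B, add_zero]
  have hp0 : p = 0 := pure_eq_zero h hpure
  have hf : f = 0 := by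
    have hE := congrArg (aeval ![(Polynomial.X : Polynomial k), 0]) hp0
    rw [map_zero, hpdef, map_add, map_mul, ← Polynomial.aeval_algHom_apply,
      ← Polynomial.aeval_algHom_apply, map_pow, map_pow, aeval_X, aeval_X] at hE
    simp only [Matrix.cons_val_zero, Matrix.cons_val_one, Matrix.head_cons,
      zero_pow hl.ne', zero_mul, add_zero] at hE
    -- hE : Polynomial.aeval (Polynomial.X ^ l) f = 0
    have : Polynomial.expand k l f = 0 := by
      rw [← Polynomial.aeval_X_left_apply (Polynomial.expand k l f), Polynomial.expand_aeval,
        hE]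
    exact Polynomial.expand_injective hl (by rw [this, map_zero])
  refine ⟨hf, ?_⟩
  have hg0 : Polynomial.aeval ((X 1 : MvPolynomial (Fin 2) k) ^ l) g = 0 := by
    rw [hpdef, hf, map_zero, zero_add] at hp0
    rcases mul_eq_zero.mp hp0 with h' | h'
    · exact absurd h' (pow_ne_zero _ (X_ne_zero _))
    · exact h'
  have hE := congrArg (aeval ![(0 : Polynomial k), Polynomial.X]) hg0
  rw [map_zero, ← Polynomial.aeval_algHom_apply, map_pow, aeval_X] at hE
  simp only [Matrix.cons_val_one, Matrix.head_cons, Matrix.cons_val_zero] at hE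
  have : Polynomial.expand k l g = 0 := by
    rw [← Polynomial.aeval_X_left_apply (Polynomial.expand k l g), Polynomial.expand_aeval, hE]
  exact Polynomial.expand_injective hl (by rw [this, map_zero])

lemma sigma_relator {t : k} {ξ : k} (hξ : ξ ≠ 0) :
    stmt3.σ ξ (X 0 * X 1 - C t) = X 0 * X 1 - C t := by
  simp only [stmt3.σ, map_sub, map_mul, aeval_X, aeval_C, Matrix.cons_val_zero,
    Matrix.cons_val_one, Matrix.head_cons, smul_eq_C_mul, algebraMap_eq]
  rw [show (C ξ * X 0) * (C ξ⁻¹ * X 1) = C (ξ * ξ⁻¹) * (X 0 * X 1 : MvPolynomial (Fin 2) k) by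
    rw [map_mul]; ring]
  rw [mul_inv_cancel₀ hξ, map_one, one_mul]

lemma sigma_ideal {t : k} {ξ : k} (hξ : ξ ≠ 0) {p : MvPolynomial (Fin 2) k}
    (hp : p ∈ Ideal.span {(X 0 * X 1 - C t : MvPolynomial (Fin 2) k)}) :
    stmt3.σ ξ p ∈ Ideal.span {(X 0 * X 1 - C t : MvPolynomial (Fin 2) k)} := by
  rw [Ideal.mem_span_singleton] at hp ⊢
  obtain ⟨h, rfl⟩ := hp
  exact ⟨stmt3.σ ξ h, by rw [map_mul, sigma_relator hξ]⟩

-- membership of balanced monomials in S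
set_option maxHeartbeats 1000000 in
lemma mono_mem {l : ℕ} (hl : 0 < l) {ζ : k} (hζ : IsPrimitiveRoot ζ l) (t : k)
    (d : Fin 2 →₀ ℕ) (c : k) (hbal : ζ ^ (d 0) = ζ ^ (d 1)) :
    Ideal.Quotient.mk (Ideal.span {(X 0 * X 1 - C t : MvPolynomial (Fin 2) k)}) (monomial d c)
      ∈ Algebra.adjoin k
        {Ideal.Quotient.mk (Ideal.span {(X 0 * X 1 - C t : MvPolynomial (Fin 2) k)}) (X 0 ^ l),
         Ideal.Quotient.mk (Ideal.span {(X 0 * X 1 - C t : MvPolynomial (Fin 2) k)}) (X 1 ^ l)} := by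
  set I := Ideal.span {(X 0 * X 1 - C t : MvPolynomial (Fin 2) k)} with hI
  set S := Algebra.adjoin k
        {Ideal.Quotient.mk I (X 0 ^ l), Ideal.Quotient.mk I (X 1 ^ l)} with hS
  have hζ0 : ζ ≠ 0 := hζ.ne_zero hl.ne'
  have hmkrel : Ideal.Quotient.mk I (X 0 * X 1 : MvPolynomial (Fin 2) k)
      = Ideal.Quotient.mk I (C t) := by
    rw [Ideal.Quotient.mk_eq_mk_iff_sub_mem]
    exact Ideal.subset_span rfl
  have hCt : ∀ n : ℕ, Ideal.Quotient.mk I ((X 0 * X 1 : MvPolynomial (Fin 2) k) ^ n) ∈ S := by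
    intro n
    rw [map_pow, hmkrel, ← map_pow, ← C_pow]
    exact (Algebra.adjoin k _).algebraMap_mem' (t ^ n)
  rcases le_total (d 1) (d 0) with hnm | hmn
  · have h1 : ζ ^ (d 0 - d 1) = 1 := by
      rw [pow_sub₀ _ hζ0 hnm, hbal, mul_inv_cancel₀ (pow_ne_zero _ hζ0)]
    obtain ⟨q, hq⟩ := (hζ.pow_eq_one_iff_dvd _).mp h1
    have hm : d 0 = l * q + d 1 := by omega
    have key : (monomial d c : MvPolynomial (Fin 2) k)
        = C c * (X 0 ^ l) ^ q * (X 0 * X 1) ^ (d 1) := by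
      rw [monomial_fin2, hm]; ring
    rw [key, map_mul, map_mul, map_pow]
    exact mul_mem (mul_mem ((Algebra.adjoin k _).algebraMap_mem' c)
      (pow_mem (Algebra.subset_adjoin (Set.mem_insert _ _)) q)) (hCt _)
  · have h1 : ζ ^ (d 1 - d 0) = 1 := by
      rw [pow_sub₀ _ hζ0 hmn, hbal, mul_inv_cancel₀ (pow_ne_zero _ hζ0)]
    obtain ⟨q, hq⟩ := (hζ.pow_eq_one_iff_dvd _).mp h1
    have hm : d 1 = l * q + d 0 := by omega
    have key : (monomial d c : MvPolynomial (Fin 2) k)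
        = C c * (X 1 ^ l) ^ q * (X 0 * X 1) ^ (d 0) := by
      rw [monomial_fin2, hm]; ring
    rw [key, map_mul, map_mul, map_pow]
    exact mul_mem (mul_mem ((Algebra.adjoin k _).algebraMap_mem' c)
      (pow_mem (Algebra.subset_adjoin (Set.mem_insert_of_mem _ (Set.mem_singleton _))) q)) (hCt _)

lemma avg_mem {l : ℕ} (hl : 0 < l) {ζ : k} (hζ : IsPrimitiveRoot ζ l) (t : k)
    (p : MvPolynomial (Fin 2) k) :
    Ideal.Quotient.mk (Ideal.span {(X 0 * X 1 - C t : MvPolynomial (Fin 2) k)})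
        (∑ i ∈ Finset.range l, stmt3.σ (ζ ^ i) p)
      ∈ Algebra.adjoin k
        {Ideal.Quotient.mk (Ideal.span {(X 0 * X 1 - C t : MvPolynomial (Fin 2) k)}) (X 0 ^ l),
         Ideal.Quotient.mk (Ideal.span {(X 0 * X 1 - C t : MvPolynomial (Fin 2) k)}) (X 1 ^ l)} := by
  induction p using MvPolynomial.induction_on' with
  | add p q hp hq =>
    have he : (∑ i ∈ Finset.range l, stmt3.σ (ζ ^ i) (p + q))
        = (∑ i ∈ Finset.range l, stmt3.σ (ζ ^ i) p)
          + (∑ i ∈ Finset.range l, stmt3.σ (ζ ^ i) q) := by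
      rw [← Finset.sum_add_distrib]
      exact Finset.sum_congr rfl fun i _ => map_add _ _ _
    rw [he, RingHom.map_add]
    exact add_mem hp hq
  | monomial d c =>
    have hζ0 : ζ ≠ 0 := hζ.ne_zero hl.ne'
    have hσ : ∀ i : ℕ, stmt3.σ (ζ ^ i) (monomial d c)
        = ((ζ ^ (d 0) * (ζ ^ (d 1))⁻¹) ^ i) • (monomial d c : MvPolynomial (Fin 2) k) := by
      intro i
      rw [sigma_monomial]
      congr 1
      simp only [inv_pow, ← pow_mul, mul_pow]
      ring_nf
    simp only [hσ]
    rw [← Finset.sum_smul]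
    set η := ζ ^ (d 0) * (ζ ^ (d 1))⁻¹ with hη
    by_cases hη1 : η = 1
    · have hbal : ζ ^ (d 0) = ζ ^ (d 1) := by
        rw [hη, mul_inv_eq_one₀ (pow_ne_zero _ hζ0)] at hη1
        exact hη1
      rw [hη1]
      simp only [one_pow, Finset.sum_const, Finset.card_range, nsmul_eq_mul, mul_one]
      have : Ideal.Quotient.mk (Ideal.span {(X 0 * X 1 - C t : MvPolynomial (Fin 2) k)})
          ((l : k) • monomial d c)
          = (l : k) • Ideal.Quotient.mk
              (Ideal.span {(X 0 * X 1 - C t : MvPolynomial (Fin 2) k)}) (monomial d c) := by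
        exact map_smul (Ideal.Quotient.mkₐ k _) _ _
      rw [this]
      exact Subalgebra.smul_mem _ (mono_mem hl hζ t d c hbal) _
    · have hgeo : (∑ i ∈ Finset.range l, η ^ i) = 0 := by
        have hηl : η ^ l = 1 := by
          rw [hη, mul_pow, inv_pow, ← pow_mul, ← pow_mul, mul_comm (d 0) l, mul_comm (d 1) l,
            pow_mul, pow_mul, hζ.pow_eq_one, one_pow, one_pow, inv_one, mul_one]
        rw [geom_sum_eq hη1, hηl, sub_self, zero_div]
      rw [hgeo, zero_smul, map_zero]
      exact zero_mem _

end Stmt3Aux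

open Stmt3Aux in
set_option maxHeartbeats 1000000 in
/-- let `μ_l` act on `A = k[z,w]/(zw - t)` by `(z,w) ↦ (ζ z, ζ⁻¹ w)`
(presented on representatives via `stmt3.σ`; the action preserves the ideal `(zw-t)`,
so an element of `A` is invariant iff all of its representatives map into its class).
The invariant subring `A^{μ_l}` is the subalgebra generated by `x = z^l` and `y = w^l`,
and is isomorphic as a `k`-algebra to `k[x,y]/(xy - t^l)`. -/
theorem stmt3 (k : Type*) [Field k] (l : ℕ) (hl : 0 < l) (ζ : k)
    (hζ : IsPrimitiveRoot ζ l) (t : k) :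
    letI P := MvPolynomial (Fin 2) k
    letI I : Ideal P := Ideal.span {(X 0 * X 1 - C t : P)}
    letI A := P ⧸ I
    letI mk : P →+* A := Ideal.Quotient.mk I
    letI S : Subalgebra k A := Algebra.adjoin k {mk (X 0 ^ l), mk (X 1 ^ l)}
    {a : A | ∀ ξ : k, ξ ^ l = 1 → ∀ p : P, mk p = a → mk (stmt3.σ ξ p) = a}
        = (S : Set A) ∧
      Nonempty (S ≃ₐ[k] (MvPolynomial (Fin 2) k ⧸
        Ideal.span {(X 0 * X 1 - C (t ^ l) : MvPolynomial (Fin 2) k)})) := by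
  set P := MvPolynomial (Fin 2) k with hP
  set I : Ideal P := Ideal.span {(X 0 * X 1 - C t : P)} with hI
  set S : Subalgebra k (P ⧸ I) := Algebra.adjoin k
    {Ideal.Quotient.mk I (X 0 ^ l), Ideal.Quotient.mk I (X 1 ^ l)} with hS
  have hne : ((l : k)) ≠ 0 := by
    have : NeZero l := ⟨hl.ne'⟩
    exact (hζ.neZero').out
  constructor
  · -- invariants = S
    apply Set.eq_of_subset_of_subset
    · rintro a ha
      obtain ⟨p, hp⟩ := Ideal.Quotient.mk_surjective a
      have hsum : Ideal.Quotient.mk I (∑ i ∈ Finset.range l, stmt3.σ (ζ ^ i) p)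
          = (l : k) • a := by
        rw [map_sum]
        rw [Finset.sum_congr rfl fun i _ => ha (ζ ^ i)
          (by rw [← pow_mul, mul_comm, pow_mul, hζ.pow_eq_one, one_pow]) p hp]
        rw [Finset.sum_const, Finset.card_range, Nat.cast_smul_eq_nsmul]
      have hmem := avg_mem hl hζ t p
      rw [hsum] at hmem
      have ha2 : a = (l : k)⁻¹ • ((l : k) • a) := by
        rw [smul_smul, inv_mul_cancel₀ hne, one_smul]
      rw [ha2]
      exact SetLike.mem_coe.mpr (Subalgebra.smul_mem _ hmem _)
    · rintro a haS ξ hξ p hp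
      have hξ0 : ξ ≠ 0 := by
        rintro rfl
        rw [zero_pow hl.ne'] at hξ
        exact one_ne_zero hξ.symm
      let σA : (P ⧸ I) →ₐ[k] (P ⧸ I) :=
        Ideal.Quotient.liftₐ I ((Ideal.Quotient.mkₐ k I).comp (stmt3.σ ξ))
          (fun r hr => by
            rw [AlgHom.comp_apply, Ideal.Quotient.mkₐ_eq_mk, Ideal.Quotient.eq_zero_iff_mem]
            exact sigma_ideal hξ0 hr)
      have hτ : ∀ q : P, σA (Ideal.Quotient.mk I q) = Ideal.Quotient.mk I (stmt3.σ ξ q) :=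
        fun q => rfl
      have : Ideal.Quotient.mk I (stmt3.σ ξ p) = σA a := by rw [← hτ p, hp]
      rw [this]
      refine Algebra.adjoin_induction (fun x hx => ?_) (fun r => ?_) (fun x y _ _ hx hy => ?_)
        (fun x y _ _ hx hy => ?_) haS
      · rcases hx with rfl | hx
        · have hfix : stmt3.σ ξ (X 0 ^ l : P) = X 0 ^ l := by
            rw [map_pow]
            have h0 : stmt3.σ ξ (X 0 : P) = ξ • X 0 := by simp [stmt3.σ]
            rw [h0, smul_pow, hξ, one_smul]
          rw [hτ, hfix]
        · rw [Set.mem_singleton_iff] at hx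
          subst hx
          have hfix : stmt3.σ ξ (X 1 ^ l : P) = X 1 ^ l := by
            rw [map_pow]
            have h1 : stmt3.σ ξ (X 1 : P) = ξ⁻¹ • X 1 := by simp [stmt3.σ]
            rw [h1, smul_pow, inv_pow, hξ, inv_one, one_smul]
          rw [hτ, hfix]
      · exact σA.commutes r
      · rw [map_add, hx, hy]
      · rw [map_mul, hx, hy]
  · -- the isomorphism
    set J : Ideal P := Ideal.span {(X 0 * X 1 - C (t ^ l) : P)} with hJ
    let φ : P →ₐ[k] (P ⧸ I) :=
      aeval ![Ideal.Quotient.mk I (X 0 ^ l), Ideal.Quotient.mk I (X 1 ^ l)]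
    have hrange : S = φ.range := by
      rw [hS, ← Algebra.adjoin_range_eq_range_aeval]
      congr 1
      ext x
      constructor
      · rintro (rfl | rfl)
        · exact ⟨0, rfl⟩
        · exact ⟨1, rfl⟩
      · rintro ⟨i, rfl⟩
        fin_cases i
        · exact Or.inl rfl
        · exact Or.inr rfl
    have halg : ∀ c : k, algebraMap k (P ⧸ I) c = Ideal.Quotient.mk I (C c) := by
      intro c
      rw [← (Ideal.Quotient.mkₐ k I).commutes c, Ideal.Quotient.mkₐ_eq_mk, algebraMap_eq]
    have hJle : J ≤ RingHom.ker φ := by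
      rw [hJ, Ideal.span_le, Set.singleton_subset_iff, SetLike.mem_coe, RingHom.mem_ker]
      have hφr : φ (X 0 * X 1 - C (t ^ l))
          = Ideal.Quotient.mk I (X 0 ^ l * X 1 ^ l - C (t ^ l)) := by
        rw [map_sub, map_mul, aeval_X, aeval_X, aeval_C]
        simp only [Matrix.cons_val_zero, Matrix.cons_val_one, Matrix.head_cons]
        rw [RingHom.map_sub, RingHom.map_mul, halg]
      rw [hφr, Ideal.Quotient.eq_zero_iff_mem, hI, Ideal.mem_span_singleton]
      have : (X 0 ^ l * X 1 ^ l - C (t ^ l) : P) = (X 0 * X 1) ^ l - (C t) ^ l := by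
        rw [mul_pow, C_pow]
      rw [this]
      exact sub_dvd_pow_sub_pow _ _ l
    have hker : RingHom.ker φ = J := by
      refine le_antisymm ?_ hJle
      intro q hq
      obtain ⟨f, g, hfg⟩ := reduce (t ^ l) q
      set R : P := Polynomial.aeval (X 0 : P) f + X 1 * Polynomial.aeval (X 1 : P) g with hR
      have hqR : φ (q - R) = 0 := RingHom.mem_ker.mp (hJle hfg)
      have hφR : φ R = 0 := by
        rw [map_sub, RingHom.mem_ker.mp hq, zero_sub, neg_eq_zero] at hqR
        exact hqR
      have hmk1 : ∀ (u : P) (h : Polynomial k), Ideal.Quotient.mk I (Polynomial.aeval u h)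
          = Polynomial.aeval (Ideal.Quotient.mk I u) h := by
        intro u h
        rw [← Ideal.Quotient.mkₐ_eq_mk k I]
        exact (Polynomial.aeval_algHom_apply (Ideal.Quotient.mkₐ k I) u h).symm
      have hcomp : φ R = Ideal.Quotient.mk I
          (Polynomial.aeval ((X 0 : P) ^ l) f + X 1 ^ l * Polynomial.aeval ((X 1 : P) ^ l) g) := by
        rw [hR, map_add, map_mul, ← Polynomial.aeval_algHom_apply, ← Polynomial.aeval_algHom_apply,
          aeval_X, aeval_X]
        simp only [Matrix.cons_val_zero, Matrix.cons_val_one, Matrix.head_cons]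
        conv_rhs => rw [RingHom.map_add, RingHom.map_mul, hmk1, hmk1]
      have hpI : (Polynomial.aeval ((X 0 : P) ^ l) f
          + X 1 ^ l * Polynomial.aeval ((X 1 : P) ^ l) g) ∈ I := by
        rw [← Ideal.Quotient.eq_zero_iff_mem, ← hcomp, hφR]
      obtain ⟨hf0, hg0⟩ := pure_zero l hl t f g hpI
      have hR0 : R = 0 := by rw [hR, hf0, hg0, map_zero, map_zero, mul_zero, add_zero]
      rw [hR0, sub_zero] at hfg
      exact hfg
    exact ⟨(Subalgebra.equivOfEq _ _ hrange).trans
      ((Ideal.quotientKerEquivRange φ).symm.trans (Ideal.quotientEquivAlgOfEq k hker))⟩
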